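/- Corollary: if the algorithm's objective weights are accuracy-aligned (A₁ ≥ A₀ and B₁ ≥ B₀) or accuracy-misaligned (A₁ ≤ A₀ and B₁ ≤ B₀), then for any measurable classifier δ : ℝ → [0,1] there exists a threshold or negative threshold rule achieving at least as high a performative generalized payoff, where performative payoff of γ uses prevalence H(r·Δ_γ). -/
import Mathlib
open MeasureTheory Set Filter Topology intervalIntegral

section aux
private lemma aux_int {f γ : ℝ → ℝ} (hfi : Integrable f) (hm : Measurable γ)
    (h0 : ∀ x, 0 ≤ γ x) (h1 : ∀ x, γ x ≤ 1) :
    Integrable (fun x => f x * γ x) := by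
  refine hfi.mono (hfi.aestronglyMeasurable.aemeasurable.mul hm.aemeasurable).aestronglyMeasurable ?_
  filter_upwards with x
  rw [Real.norm_eq_abs, Real.norm_eq_abs, abs_mul]
  have h2 : |γ x| ≤ 1 := abs_le.2 ⟨by linarith [h0 x], h1 x⟩
  nlinarith [abs_nonneg (f x)]

private lemma tail_integral_eq {g : ℝ → ℝ} (hgi : Integrable g) (τ : ℝ) :
    ∫ x in Ioi τ, g x = (∫ x, g x) - ((∫ x in Iic (0:ℝ), g x) + ∫ x in (0:ℝ)..τ, g x) := by
  have h1 : (∫ x in Iic τ, g x) - (∫ x in Iic (0:ℝ), g x) = ∫ x in (0:ℝ)..τ, g x :=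
    intervalIntegral.integral_Iic_sub_Iic hgi.integrableOn hgi.integrableOn
  have h2 : (∫ x in Iic τ, g x) + (∫ x in Ioi τ, g x) = ∫ x, g x :=
    intervalIntegral.integral_Iic_add_Ioi hgi.integrableOn hgi.integrableOn
  linarith

private lemma tail_continuous {g : ℝ → ℝ} (hgi : Integrable g) :
    Continuous fun τ => ∫ x in Ioi τ, g x := by
  have h : Continuous fun τ : ℝ => (∫ x, g x) - ((∫ x in Iic (0:ℝ), g x) + ∫ x in (0:ℝ)..τ, g x) :=
    continuous_const.sub (continuous_const.add (hgi.continuous_primitive 0))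
  exact h.congr fun τ => (tail_integral_eq hgi τ).symm

private lemma tail_tendsto_atTop {g : ℝ → ℝ} (hgi : Integrable g) :
    Tendsto (fun τ => ∫ x in Ioi τ, g x) atTop (𝓝 0) := by
  have h1 : Tendsto (fun τ : ℝ => ∫ x in (0:ℝ)..τ, g x) atTop (𝓝 (∫ x in Ioi (0:ℝ), g x)) :=
    intervalIntegral_tendsto_integral_Ioi 0 hgi.integrableOn tendsto_id
  have h2 : Tendsto (fun τ : ℝ => (∫ x, g x) - ((∫ x in Iic (0:ℝ), g x) + ∫ x in (0:ℝ)..τ, g x))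
      atTop (𝓝 ((∫ x, g x) - ((∫ x in Iic (0:ℝ), g x) + ∫ x in Ioi (0:ℝ), g x))) :=
    tendsto_const_nhds.sub (tendsto_const_nhds.add h1)
  have h3 : (∫ x, g x) - ((∫ x in Iic (0:ℝ), g x) + ∫ x in Ioi (0:ℝ), g x) = 0 := by
    have := intervalIntegral.integral_Iic_add_Ioi (b := (0:ℝ)) hgi.integrableOn hgi.integrableOn
    linarith
  rw [h3] at h2
  exact h2.congr fun τ => (tail_integral_eq hgi τ).symm

private lemma tail_tendsto_atBot {g : ℝ → ℝ} (hgi : Integrable g) :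
    Tendsto (fun τ => ∫ x in Ioi τ, g x) atBot (𝓝 (∫ x, g x)) := by
  have h1 : Tendsto (fun τ : ℝ => ∫ x in τ..(0:ℝ), g x) atBot (𝓝 (∫ x in Iic (0:ℝ), g x)) :=
    intervalIntegral_tendsto_integral_Iic 0 hgi.integrableOn tendsto_id
  have h2 : Tendsto (fun τ : ℝ => (∫ x, g x) - ((∫ x in Iic (0:ℝ), g x) + -∫ x in τ..(0:ℝ), g x))
      atBot (𝓝 ((∫ x, g x) - ((∫ x in Iic (0:ℝ), g x) + -∫ x in Iic (0:ℝ), g x))) :=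
    tendsto_const_nhds.sub (tendsto_const_nhds.add h1.neg)
  have h3 : (∫ x, g x) - ((∫ x in Iic (0:ℝ), g x) + -∫ x in Iic (0:ℝ), g x) = ∫ x, g x := by ring
  rw [h3] at h2
  refine h2.congr fun τ => ?_
  rw [intervalIntegral.integral_symm 0 τ, neg_neg]
  exact (tail_integral_eq hgi τ).symm
end aux
private lemma np_core {f0 f1 γ δ : ℝ → ℝ} (k : ℝ)
    (hf0i : Integrable f0) (hf1i : Integrable f1)
    (hγm : Measurable γ) (hγ0 : ∀ x, 0 ≤ γ x) (hγ1 : ∀ x, γ x ≤ 1)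
    (hδm : Measurable δ) (hδ0 : ∀ x, 0 ≤ δ x) (hδ1 : ∀ x, δ x ≤ 1)
    (hpt : ∀ x, 0 ≤ (γ x - δ x) * (f1 x - k * f0 x))
    (hD : (∫ x, f1 x * γ x) - (∫ x, f0 x * γ x) = (∫ x, f1 x * δ x) - (∫ x, f0 x * δ x)) :
    0 ≤ ((∫ x, f1 x * γ x) - ∫ x, f1 x * δ x) * (1 - k) := by
  have i1 : Integrable (fun x => f1 x * γ x) := aux_int hf1i hγm hγ0 hγ1
  have i2 : Integrable (fun x => f1 x * δ x) := aux_int hf1i hδm hδ0 hδ1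
  have i3 : Integrable (fun x => f0 x * γ x) := aux_int hf0i hγm hγ0 hγ1
  have i4 : Integrable (fun x => f0 x * δ x) := aux_int hf0i hδm hδ0 hδ1
  have hI : 0 ≤ ∫ x, (γ x - δ x) * (f1 x - k * f0 x) := integral_nonneg hpt
  have hexp : ∫ x, (γ x - δ x) * (f1 x - k * f0 x)
      = ((∫ x, f1 x * γ x) - ∫ x, f1 x * δ x) - k * ((∫ x, f0 x * γ x) - ∫ x, f0 x * δ x) := by
    calc ∫ x, (γ x - δ x) * (f1 x - k * f0 x)
        = ∫ x, ((f1 x * γ x - f1 x * δ x) - k * (f0 x * γ x - f0 x * δ x)) :=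
          integral_congr_ae (Filter.Eventually.of_forall fun x => by ring)
      _ = ((∫ x, f1 x * γ x) - ∫ x, f1 x * δ x) - k * ((∫ x, f0 x * γ x) - ∫ x, f0 x * δ x) := by
          rw [integral_sub
              (show Integrable (fun x => f1 x * γ x - f1 x * δ x) volume from i1.sub i2)
              (show Integrable (fun x => k * (f0 x * γ x - f0 x * δ x)) volume from
                (i3.sub i4).const_mul k),
            MeasureTheory.integral_const_mul,
            integral_sub i1 i2, integral_sub i3 i4]
  rw [hexp] at hI
  have he : k * ((∫ x, f0 x * γ x) - ∫ x, f0 x * δ x)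
      = k * ((∫ x, f1 x * γ x) - ∫ x, f1 x * δ x) := by
    have : (∫ x, f0 x * γ x) - ∫ x, f0 x * δ x = (∫ x, f1 x * γ x) - ∫ x, f1 x * δ x := by
      linarith
    rw [this]
  nlinarith [hI, he]
set_option maxHeartbeats 2000000 in
theorem stmt19 (f0 f1 : ℝ → ℝ) (H : ℝ → ℝ) (r A1 A0 B1 B0 : ℝ) (δ : ℝ → ℝ)
    (hf0pos : ∀ x, 0 < f0 x) (hf1pos : ∀ x, 0 < f1 x)
    (hf0c : Continuous f0) (hf1c : Continuous f1)
    (hf0i : Integrable f0) (hf1i : Integrable f1)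
    (hf0int : ∫ x, f0 x = 1) (hf1int : ∫ x, f1 x = 1)
    (hmlrp : StrictMono (fun x => f1 x / f0 x))
    (hHc : Continuous H) (hHmono : Monotone H)
    (hH0 : ∀ t, 0 ≤ H t) (hH1 : ∀ t, H t ≤ 1)
    (hr : 0 < r)
    (haligned : (A0 ≤ A1 ∧ B0 ≤ B1) ∨ (A1 ≤ A0 ∧ B1 ≤ B0))
    (hδm : Measurable δ) (hδ0 : ∀ x, 0 ≤ δ x) (hδ1 : ∀ x, δ x ≤ 1) :
    ∃ γ : ℝ → ℝ,
      ((∃ τ : ℝ, γ = fun x => if τ < x then 1 else 0) ∨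
       (∃ τ : ℝ, γ = fun x => if x < τ then 1 else 0) ∨
       (γ = fun _ => 1) ∨ (γ = fun _ => 0)) ∧
      H (r * ∫ x, (f1 x - f0 x) * δ x) * (∫ x, (A1 * δ x + A0 * (1 - δ x)) * f1 x) +
        (1 - H (r * ∫ x, (f1 x - f0 x) * δ x)) * (∫ x, (B1 * (1 - δ x) + B0 * δ x) * f0 x) ≤
      H (r * ∫ x, (f1 x - f0 x) * γ x) * (∫ x, (A1 * γ x + A0 * (1 - γ x)) * f1 x) +
        (1 - H (r * ∫ x, (f1 x - f0 x) * γ x)) * (∫ x, (B1 * (1 - γ x) + B0 * γ x) * f0 x) := by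
  classical
  have hgi : Integrable (fun x => f1 x - f0 x) := hf1i.sub hf0i
  have hgint : (∫ x, (f1 x - f0 x)) = 0 := by
    rw [integral_sub hf1i hf0i, hf1int, hf0int]; ring
  -- expansion of the Δ functional
  have hDexp : ∀ γ : ℝ → ℝ, Measurable γ → (∀ x, 0 ≤ γ x) → (∀ x, γ x ≤ 1) →
      ∫ x, (f1 x - f0 x) * γ x = (∫ x, f1 x * γ x) - ∫ x, f0 x * γ x := by
    intro γ hm h0 h1
    rw [show (fun x => (f1 x - f0 x) * γ x) = fun x => f1 x * γ x - f0 x * γ x from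
      funext fun x => by ring]
    exact integral_sub (aux_int hf1i hm h0 h1) (aux_int hf0i hm h0 h1)
  -- the key reduction: it suffices to match Δ and improve the f1-mass in the right direction
  have key : ∀ γ : ℝ → ℝ, Measurable γ → (∀ x, 0 ≤ γ x) → (∀ x, γ x ≤ 1) →
      (∫ x, (f1 x - f0 x) * γ x) = (∫ x, (f1 x - f0 x) * δ x) →
      0 ≤ ((∫ x, f1 x * γ x) - ∫ x, f1 x * δ x) *
        (H (r * ∫ x, (f1 x - f0 x) * δ x) * (A1 - A0)
          - (1 - H (r * ∫ x, (f1 x - f0 x) * δ x)) * (B1 - B0)) →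
      H (r * ∫ x, (f1 x - f0 x) * δ x) * (∫ x, (A1 * δ x + A0 * (1 - δ x)) * f1 x) +
        (1 - H (r * ∫ x, (f1 x - f0 x) * δ x)) * (∫ x, (B1 * (1 - δ x) + B0 * δ x) * f0 x) ≤
      H (r * ∫ x, (f1 x - f0 x) * γ x) * (∫ x, (A1 * γ x + A0 * (1 - γ x)) * f1 x) +
        (1 - H (r * ∫ x, (f1 x - f0 x) * γ x)) * (∫ x, (B1 * (1 - γ x) + B0 * γ x) * f0 x) := by
    intro γ hm h0 h1 hDe hsign
    have epay1 : ∀ ψ : ℝ → ℝ, Measurable ψ → (∀ x, 0 ≤ ψ x) → (∀ x, ψ x ≤ 1) →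
        ∫ x, (A1 * ψ x + A0 * (1 - ψ x)) * f1 x = A0 + (A1 - A0) * ∫ x, f1 x * ψ x := by
      intro ψ hψm hψ0 hψ1
      rw [show (fun x => (A1 * ψ x + A0 * (1 - ψ x)) * f1 x)
          = fun x => A0 * f1 x + (A1 - A0) * (f1 x * ψ x) from funext fun x => by ring]
      rw [integral_add (hf1i.const_mul A0)
        (show Integrable (fun x => (A1 - A0) * (f1 x * ψ x)) volume from
          (aux_int hf1i hψm hψ0 hψ1).const_mul _),
        MeasureTheory.integral_const_mul, MeasureTheory.integral_const_mul, hf1int]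
      ring
    have epay0 : ∀ ψ : ℝ → ℝ, Measurable ψ → (∀ x, 0 ≤ ψ x) → (∀ x, ψ x ≤ 1) →
        ∫ x, (B1 * (1 - ψ x) + B0 * ψ x) * f0 x = B1 - (B1 - B0) * ∫ x, f0 x * ψ x := by
      intro ψ hψm hψ0 hψ1
      rw [show (fun x => (B1 * (1 - ψ x) + B0 * ψ x) * f0 x)
          = fun x => B1 * f0 x - (B1 - B0) * (f0 x * ψ x) from funext fun x => by ring]
      rw [integral_sub (hf0i.const_mul B1)
        (show Integrable (fun x => (B1 - B0) * (f0 x * ψ x)) volume from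
          (aux_int hf0i hψm hψ0 hψ1).const_mul _),
        MeasureTheory.integral_const_mul, MeasureTheory.integral_const_mul, hf0int]
      ring
    rw [hDe, epay1 γ hm h0 h1, epay0 γ hm h0 h1, epay1 δ hδm hδ0 hδ1, epay0 δ hδm hδ0 hδ1]
    have hq : (∫ x, f0 x * γ x) = (∫ x, f0 x * δ x) + ((∫ x, f1 x * γ x) - ∫ x, f1 x * δ x) := by
      have d1 := hDexp γ hm h0 h1
      have d2 := hDexp δ hδm hδ0 hδ1
      rw [d1, d2] at hDe
      linarith
    rw [hq]
    nlinarith [hsign]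
  -- a.e.-equal version
  have keyae : ∀ γ : ℝ → ℝ, Measurable γ → (∀ x, 0 ≤ γ x) → (∀ x, γ x ≤ 1) →
      (γ =ᵐ[volume] δ) →
      H (r * ∫ x, (f1 x - f0 x) * δ x) * (∫ x, (A1 * δ x + A0 * (1 - δ x)) * f1 x) +
        (1 - H (r * ∫ x, (f1 x - f0 x) * δ x)) * (∫ x, (B1 * (1 - δ x) + B0 * δ x) * f0 x) ≤
      H (r * ∫ x, (f1 x - f0 x) * γ x) * (∫ x, (A1 * γ x + A0 * (1 - γ x)) * f1 x) +
        (1 - H (r * ∫ x, (f1 x - f0 x) * γ x)) * (∫ x, (B1 * (1 - γ x) + B0 * γ x) * f0 x) := by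
    intro γ hm h0 h1 hae
    refine key γ hm h0 h1 ?_ ?_
    · exact integral_congr_ae (by filter_upwards [hae] with x hx; rw [hx])
    · have h2 : (∫ x, f1 x * γ x) = ∫ x, f1 x * δ x :=
        integral_congr_ae (by filter_upwards [hae] with x hx; rw [hx])
      rw [h2, sub_self, zero_mul]
  -- crossing point
  have hratio : Continuous fun x => f1 x / f0 x := hf1c.div hf0c fun x => (hf0pos x).ne'
  obtain ⟨x0, hx0⟩ : ∃ z, f1 z = f0 z := by
    by_contra hno
    push_neg at hno
    have hside : (∀ x, f1 x < f0 x) ∨ (∀ x, f0 x < f1 x) := by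
      by_contra hcon
      push_neg at hcon
      obtain ⟨⟨u, hu⟩, v, hv⟩ := hcon
      have h1u : 1 ≤ f1 u / f0 u := (one_le_div (hf0pos u)).2 hu
      have h1v : f1 v / f0 v ≤ 1 := (div_le_one (hf0pos v)).2 hv
      obtain ⟨z, _, hz⟩ := intermediate_value_uIcc (hratio.continuousOn (s := uIcc v u))
        (by rw [Set.mem_uIcc]; left; exact ⟨h1v, h1u⟩)
      exact hno z ((div_eq_one_iff_eq (hf0pos z).ne').1 hz)
    rcases hside with hs | hs
    · have hnn : (0 : ℝ → ℝ) ≤ fun x => f0 x - f1 x := fun x => by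
        have := hs x; simp only [Pi.zero_apply]; linarith
      have hpos : 0 < ∫ x, (f0 x - f1 x) := by
        rw [integral_pos_iff_support_of_nonneg hnn
          (show Integrable (fun x => f0 x - f1 x) volume from hf0i.sub hf1i)]
        have hsup : Function.support (fun x => f0 x - f1 x) = Set.univ := by
          ext x; simp only [Function.mem_support, Set.mem_univ, iff_true]
          have := hs x; intro h; rw [sub_eq_zero] at h; linarith
        rw [hsup]
        simp
      have hz : (∫ x, (f0 x - f1 x)) = 0 := by
        rw [integral_sub hf0i hf1i, hf0int, hf1int]; ring
      linarith
    · have hnn : (0 : ℝ → ℝ) ≤ fun x => f1 x - f0 x := fun x => by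
        have := hs x; simp only [Pi.zero_apply]; linarith
      have hpos : 0 < ∫ x, (f1 x - f0 x) := by
        rw [integral_pos_iff_support_of_nonneg hnn hgi]
        have hsup : Function.support (fun x => f1 x - f0 x) = Set.univ := by
          ext x; simp only [Function.mem_support, Set.mem_univ, iff_true]
          have := hs x; intro h; rw [sub_eq_zero] at h; linarith
        rw [hsup]
        simp
      linarith
  have hrat0 : f1 x0 / f0 x0 = 1 := (div_eq_one_iff_eq (hf0pos x0).ne').2 hx0
  have hltx : ∀ ⦃x⦄, x < x0 → f1 x < f0 x := by
    intro x hx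
    have h' : f1 x / f0 x < f1 x0 / f0 x0 := hmlrp hx
    rw [hrat0] at h'
    exact (div_lt_one (hf0pos x)).1 h'
  have hgtx : ∀ ⦃x⦄, x0 < x → f0 x < f1 x := by
    intro x hx
    have h' : f1 x0 / f0 x0 < f1 x / f0 x := hmlrp hx
    rw [hrat0] at h'
    exact (one_lt_div (hf0pos x)).1 h'
  have hnex : ∀ ⦃x⦄, x ≠ x0 → f1 x ≠ f0 x := by
    intro x hx h
    rcases lt_or_gt_of_ne hx with h' | h'
    · exact absurd h (hltx h').ne
    · exact absurd h (hgtx h').ne'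
  -- indicator facts
  have indmIoi : ∀ τ : ℝ, Measurable fun x : ℝ => if τ < x then (1:ℝ) else 0 := fun τ =>
    Measurable.ite measurableSet_Ioi measurable_const measurable_const
  have indmIio : ∀ τ : ℝ, Measurable fun x : ℝ => if x < τ then (1:ℝ) else 0 := fun τ =>
    Measurable.ite measurableSet_Iio measurable_const measurable_const
  have hindIoi : ∀ (f : ℝ → ℝ) (τ : ℝ),
      (∫ x, f x * (if τ < x then (1:ℝ) else 0)) = ∫ x in Ioi τ, f x := by
    intro f τ
    rw [← MeasureTheory.integral_indicator measurableSet_Ioi]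
    refine integral_congr_ae (Filter.Eventually.of_forall fun x => ?_)
    by_cases h : τ < x <;> simp [Set.indicator_apply, Set.mem_Ioi, h]
  have hindIio : ∀ (f : ℝ → ℝ) (τ : ℝ),
      (∫ x, f x * (if x < τ then (1:ℝ) else 0)) = ∫ x in Iio τ, f x := by
    intro f τ
    rw [← MeasureTheory.integral_indicator measurableSet_Iio]
    refine integral_congr_ae (Filter.Eventually.of_forall fun x => ?_)
    by_cases h : x < τ <;> simp [Set.indicator_apply, Set.mem_Iio, h]
  have hIioG : ∀ τ : ℝ,
      (∫ x in Iio τ, (f1 x - f0 x)) = - ∫ x in Ioi τ, (f1 x - f0 x) := by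
    intro τ
    have h2 : (∫ x in Iic τ, (f1 x - f0 x)) = ∫ x in Iio τ, (f1 x - f0 x) :=
      integral_Iic_eq_integral_Iio
    have h3 : (∫ x in Iic τ, (f1 x - f0 x)) + (∫ x in Ioi τ, (f1 x - f0 x))
        = ∫ x, (f1 x - f0 x) :=
      intervalIntegral.integral_Iic_add_Ioi hgi.integrableOn hgi.integrableOn
    rw [hgint] at h3
    linarith
  have ind0 : ∀ τ : ℝ, ∀ x : ℝ, (0:ℝ) ≤ if τ < x then (1:ℝ) else 0 := by
    intro τ x; split <;> norm_num
  have ind1 : ∀ τ : ℝ, ∀ x : ℝ, (if τ < x then (1:ℝ) else 0) ≤ 1 := by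
    intro τ x; split <;> norm_num
  have ind0' : ∀ τ : ℝ, ∀ x : ℝ, (0:ℝ) ≤ if x < τ then (1:ℝ) else 0 := by
    intro τ x; split <;> norm_num
  have ind1' : ∀ τ : ℝ, ∀ x : ℝ, (if x < τ then (1:ℝ) else 0) ≤ 1 := by
    intro τ x; split <;> norm_num
  have hindDIoi : ∀ τ : ℝ, (∫ x, (f1 x - f0 x) * (if τ < x then (1:ℝ) else 0))
      = ∫ x in Ioi τ, (f1 x - f0 x) := fun τ => hindIoi (fun x => f1 x - f0 x) τ
  have hindDIio : ∀ τ : ℝ, (∫ x, (f1 x - f0 x) * (if x < τ then (1:ℝ) else 0))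
      = - ∫ x in Ioi τ, (f1 x - f0 x) := fun τ => by
    rw [hindIio (fun x => f1 x - f0 x) τ]; exact hIioG τ
  have hGc : Continuous fun τ => ∫ x in Ioi τ, (f1 x - f0 x) := tail_continuous hgi
  have hGtop : Filter.Tendsto (fun τ => ∫ x in Ioi τ, (f1 x - f0 x)) Filter.atTop (nhds 0) :=
    tail_tendsto_atTop hgi
  have hGbot : Filter.Tendsto (fun τ => ∫ x in Ioi τ, (f1 x - f0 x)) Filter.atBot (nhds 0) := by
    have := tail_tendsto_atBot hgi; rwa [hgint] at this
  -- Neyman-Pearson comparisons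
  have np_final : ∀ γ : ℝ → ℝ, Measurable γ → (∀ x, 0 ≤ γ x) → (∀ x, γ x ≤ 1) →
      (∫ x, (f1 x - f0 x) * γ x) = (∫ x, (f1 x - f0 x) * δ x) →
      ∀ k : ℝ, (∀ x, 0 ≤ (γ x - δ x) * (f1 x - k * f0 x)) →
      0 ≤ ((∫ x, f1 x * γ x) - ∫ x, f1 x * δ x) * (1 - k) := by
    intro γ hm h0 h1 hDe k hpt
    refine np_core k hf0i hf1i hm h0 h1 hδm hδ0 hδ1 hpt ?_
    rw [← hDexp γ hm h0 h1, ← hDexp δ hδm hδ0 hδ1]; exact hDe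
  have np_final' : ∀ γ : ℝ → ℝ, Measurable γ → (∀ x, 0 ≤ γ x) → (∀ x, γ x ≤ 1) →
      (∫ x, (f1 x - f0 x) * γ x) = (∫ x, (f1 x - f0 x) * δ x) →
      ∀ k : ℝ, (∀ x, 0 ≤ (δ x - γ x) * (f1 x - k * f0 x)) →
      0 ≤ ((∫ x, f1 x * δ x) - ∫ x, f1 x * γ x) * (1 - k) := by
    intro γ hm h0 h1 hDe k hpt
    refine np_core k hf0i hf1i hδm hδ0 hδ1 hm h0 h1 hpt ?_
    rw [← hDexp γ hm h0 h1, ← hDexp δ hδm hδ0 hδ1]; exact hDe.symm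
  have hkltG : ∀ τ x : ℝ, x < τ → f1 x < f1 τ / f0 τ * f0 x := fun τ x h =>
    (div_lt_iff₀ (hf0pos x)).1 (show f1 x / f0 x < f1 τ / f0 τ from hmlrp h)
  have hkgtG : ∀ τ x : ℝ, τ < x → f1 τ / f0 τ * f0 x < f1 x := fun τ x h =>
    (lt_div_iff₀ (hf0pos x)).1 (show f1 τ / f0 τ < f1 x / f0 x from hmlrp h)
  have hkeqG : ∀ τ : ℝ, f1 τ - f1 τ / f0 τ * f0 τ = 0 := fun τ => by
    rw [div_mul_cancel₀ _ (hf0pos τ).ne', sub_self]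
  have hptIoi : ∀ τ x : ℝ,
      0 ≤ ((if τ < x then (1:ℝ) else 0) - δ x) * (f1 x - f1 τ / f0 τ * f0 x) := by
    intro τ x
    rcases lt_trichotomy x τ with h | h | h
    · rw [if_neg (by linarith)]
      have := hkltG τ x h
      nlinarith [hδ0 x]
    · rw [h, if_neg (lt_irrefl τ), hkeqG τ, mul_zero]
    · rw [if_pos h]
      have := hkgtG τ x h
      nlinarith [hδ1 x]
  have hptIio : ∀ τ x : ℝ,
      0 ≤ (δ x - (if x < τ then (1:ℝ) else 0)) * (f1 x - f1 τ / f0 τ * f0 x) := by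
    intro τ x
    rcases lt_trichotomy x τ with h | h | h
    · rw [if_pos h]
      have := hkltG τ x h
      nlinarith [hδ1 x]
    · rw [h, if_neg (lt_irrefl τ), hkeqG τ, mul_zero]
    · rw [if_neg (by linarith : ¬ x < τ)]
      have := hkgtG τ x h
      nlinarith [hδ0 x]
  have hx0ae : ∀ᵐ (x : ℝ) ∂volume, x ≠ x0 := by
    refine ae_iff.2 ?_
    simp only [ne_eq, not_not, setOf_eq_eq_singleton]
    exact measure_singleton x0
  set c : ℝ := H (r * ∫ x, (f1 x - f0 x) * δ x) * (A1 - A0)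
      - (1 - H (r * ∫ x, (f1 x - f0 x) * δ x)) * (B1 - B0) with hcdef
  rcases lt_trichotomy (∫ x, (f1 x - f0 x) * δ x) 0 with hD | hD | hD
  · -- negative Δ : use rules of the form 1_{x < τ}
    have hpt0 : ∀ x, 0 ≤ (f1 x - f0 x) * δ x
        - (f1 x - f0 x) * (if x < x0 then (1:ℝ) else 0) := by
      intro x
      rcases lt_trichotomy x x0 with h | h | h
      · rw [if_pos h]
        have := hltx h
        nlinarith [hδ1 x]
      · subst h
        rw [hx0]
        simp
      · rw [if_neg (by linarith : ¬ x < x0)]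
        have := hgtx h
        nlinarith [hδ0 x]
    have hint0 : Integrable (fun x => (f1 x - f0 x) * δ x
        - (f1 x - f0 x) * (if x < x0 then (1:ℝ) else 0)) :=
      (aux_int hgi hδm hδ0 hδ1).sub (aux_int hgi (indmIio x0) (ind0' x0) (ind1' x0))
    have hsplit0 : (∫ x, ((f1 x - f0 x) * δ x
          - (f1 x - f0 x) * (if x < x0 then (1:ℝ) else 0)))
        = (∫ x, (f1 x - f0 x) * δ x) + ∫ x in Ioi x0, (f1 x - f0 x) := by
      rw [integral_sub (aux_int hgi hδm hδ0 hδ1) (aux_int hgi (indmIio x0) (ind0' x0) (ind1' x0)),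
        hindDIio x0]
      ring
    have hlb : - ∫ x in Ioi x0, (f1 x - f0 x) ≤ ∫ x, (f1 x - f0 x) * δ x := by
      have h1 : 0 ≤ ∫ x, ((f1 x - f0 x) * δ x
          - (f1 x - f0 x) * (if x < x0 then (1:ℝ) else 0)) := integral_nonneg hpt0
      rw [hsplit0] at h1
      linarith
    rcases eq_or_lt_of_le hlb with heq | hlt2
    · -- edge case : δ is a.e. equal to the rule 1_{x < x0}
      have hz : (∫ x, ((f1 x - f0 x) * δ x
          - (f1 x - f0 x) * (if x < x0 then (1:ℝ) else 0))) = 0 := by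
        rw [hsplit0]; linarith
      have haez := (integral_eq_zero_iff_of_nonneg hpt0 hint0).1 hz
      have hae : (fun x => if x < x0 then (1:ℝ) else 0) =ᵐ[volume] δ := by
        filter_upwards [haez, hx0ae] with x h1 h2
        have h3 : (f1 x - f0 x) * (δ x - (if x < x0 then (1:ℝ) else 0)) = 0 := by
          have h4 : (f1 x - f0 x) * δ x - (f1 x - f0 x) * (if x < x0 then (1:ℝ) else 0) = 0 := h1
          linear_combination h4
        rcases mul_eq_zero.1 h3 with h5 | h5
        · exact absurd (by linarith [sub_eq_zero.1 h5] : f1 x = f0 x) (hnex h2)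
        · linarith [sub_eq_zero.1 h5]
      exact ⟨_, Or.inr (Or.inl ⟨x0, rfl⟩),
        keyae _ (indmIio x0) (ind0' x0) (ind1' x0) hae⟩
    · rcases le_or_gt 0 c with hc | hc
      · -- need τ > x0
        obtain ⟨τ2, hτ2x0, hτ2⟩ : ∃ τ2, x0 < τ2 ∧
            (∫ x, (f1 x - f0 x) * δ x) < - ∫ x in Ioi τ2, (f1 x - f0 x) := by
          have h1 : ∀ᶠ τ : ℝ in Filter.atTop,
              (∫ x, (f1 x - f0 x) * δ x) < - ∫ x in Ioi τ, (f1 x - f0 x) := by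
            have := hGtop.neg
            rw [neg_zero] at this
            exact this.eventually_const_lt hD
          have h2 : ∀ᶠ τ : ℝ in Filter.atTop, x0 < τ := Filter.eventually_gt_atTop x0
          obtain ⟨τ2, h3, h4⟩ := (h2.and h1).exists
          exact ⟨τ2, h3, h4⟩
        obtain ⟨τ, hτmem, hτval⟩ := intermediate_value_Icc hτ2x0.le
          ((hGc.neg).continuousOn) ⟨hlt2.le, hτ2.le⟩
        have hτval' : - (∫ x in Ioi τ, (f1 x - f0 x)) = ∫ x, (f1 x - f0 x) * δ x := hτval
        have hτx0 : x0 < τ := by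
          rcases eq_or_lt_of_le hτmem.1 with h | h
          · exfalso; rw [← h] at hτval'; linarith
          · exact h
        have hDγ : (∫ x, (f1 x - f0 x) * (if x < τ then (1:ℝ) else 0))
            = ∫ x, (f1 x - f0 x) * δ x := by rw [hindDIio τ]; exact hτval'
        refine ⟨_, Or.inr (Or.inl ⟨τ, rfl⟩),
          key _ (indmIio τ) (ind0' τ) (ind1' τ) hDγ ?_⟩
        have hnp := np_final' _ (indmIio τ) (ind0' τ) (ind1' τ) hDγ (f1 τ / f0 τ) (hptIio τ)
        have hk : 1 < f1 τ / f0 τ := (one_lt_div (hf0pos τ)).2 (hgtx hτx0)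
        have hd : 0 ≤ (∫ x, f1 x * (if x < τ then (1:ℝ) else 0)) - ∫ x, f1 x * δ x := by
          nlinarith [hnp, hk]
        exact mul_nonneg hd hc
      · -- need τ < x0
        obtain ⟨τ1, hτ1x0, hτ1⟩ : ∃ τ1, τ1 < x0 ∧
            (∫ x, (f1 x - f0 x) * δ x) < - ∫ x in Ioi τ1, (f1 x - f0 x) := by
          have h1 : ∀ᶠ τ : ℝ in Filter.atBot,
              (∫ x, (f1 x - f0 x) * δ x) < - ∫ x in Ioi τ, (f1 x - f0 x) := by
            have := hGbot.neg
            rw [neg_zero] at this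
            exact this.eventually_const_lt hD
          have h2 : ∀ᶠ τ : ℝ in Filter.atBot, τ < x0 := Filter.eventually_lt_atBot x0
          obtain ⟨τ1, h3, h4⟩ := (h2.and h1).exists
          exact ⟨τ1, h3, h4⟩
        obtain ⟨τ, hτmem, hτval⟩ := intermediate_value_Icc' hτ1x0.le
          ((hGc.neg).continuousOn) ⟨hlt2.le, hτ1.le⟩
        have hτval' : - (∫ x in Ioi τ, (f1 x - f0 x)) = ∫ x, (f1 x - f0 x) * δ x := hτval
        have hτx0 : τ < x0 := by
          rcases eq_or_lt_of_le hτmem.2 with h | h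
          · exfalso; rw [h] at hτval'; linarith
          · exact h
        have hDγ : (∫ x, (f1 x - f0 x) * (if x < τ then (1:ℝ) else 0))
            = ∫ x, (f1 x - f0 x) * δ x := by rw [hindDIio τ]; exact hτval'
        refine ⟨_, Or.inr (Or.inl ⟨τ, rfl⟩),
          key _ (indmIio τ) (ind0' τ) (ind1' τ) hDγ ?_⟩
        have hnp := np_final' _ (indmIio τ) (ind0' τ) (ind1' τ) hDγ (f1 τ / f0 τ) (hptIio τ)
        have hk : f1 τ / f0 τ < 1 := (div_lt_one (hf0pos τ)).2 (hltx hτx0)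
        have hd : (∫ x, f1 x * (if x < τ then (1:ℝ) else 0)) - (∫ x, f1 x * δ x) ≤ 0 := by
          nlinarith [hnp, hk]
        nlinarith [hd, hc]
  · -- Δ = 0 : use a constant rule
    rcases le_or_gt 0 c with hc | hc
    · refine ⟨fun _ => (1:ℝ), Or.inr (Or.inr (Or.inl rfl)),
        key _ measurable_const (fun _ => zero_le_one) (fun _ => le_rfl) ?_ ?_⟩
      · rw [show (fun x => (f1 x - f0 x) * (1:ℝ)) = fun x => f1 x - f0 x from
          funext fun x => mul_one _, hgint, hD]
      · have hP1 : (∫ x, f1 x * (1:ℝ)) = 1 := by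
          rw [show (fun x => f1 x * (1:ℝ)) = f1 from funext fun x => mul_one _]
          exact hf1int
        have hPle : (∫ x, f1 x * δ x) ≤ 1 := by
          rw [← hf1int]
          refine integral_mono (aux_int hf1i hδm hδ0 hδ1) hf1i fun x => ?_
          nlinarith [hδ1 x, (hf1pos x).le, hδ0 x]
        rw [hP1]
        exact mul_nonneg (by linarith) hc
    · refine ⟨fun _ => (0:ℝ), Or.inr (Or.inr (Or.inr rfl)),
        key _ measurable_const (fun _ => le_rfl) (fun _ => zero_le_one) ?_ ?_⟩
      · rw [show (fun x => (f1 x - f0 x) * (0:ℝ)) = fun _ => (0:ℝ) from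
          funext fun x => mul_zero _, MeasureTheory.integral_zero, hD]
      · have hP0 : (∫ x, f1 x * (0:ℝ)) = 0 := by
          rw [show (fun x => f1 x * (0:ℝ)) = fun _ => (0:ℝ) from funext fun x => mul_zero _,
            MeasureTheory.integral_zero]
        have hPge : 0 ≤ ∫ x, f1 x * δ x :=
          integral_nonneg fun x => mul_nonneg (hf1pos x).le (hδ0 x)
        rw [hP0]
        nlinarith [hPge, hc]
  · -- positive Δ : use rules of the form 1_{τ < x}
    have hpt0 : ∀ x, 0 ≤ (f1 x - f0 x) * (if x0 < x then (1:ℝ) else 0)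
        - (f1 x - f0 x) * δ x := by
      intro x
      rcases lt_trichotomy x x0 with h | h | h
      · rw [if_neg (by linarith : ¬ x0 < x)]
        have := hltx h
        nlinarith [hδ0 x]
      · subst h
        rw [hx0]
        simp
      · rw [if_pos h]
        have := hgtx h
        nlinarith [hδ1 x]
    have hint0 : Integrable (fun x => (f1 x - f0 x) * (if x0 < x then (1:ℝ) else 0)
        - (f1 x - f0 x) * δ x) :=
      (aux_int hgi (indmIoi x0) (ind0 x0) (ind1 x0)).sub (aux_int hgi hδm hδ0 hδ1)
    have hsplit0 : (∫ x, ((f1 x - f0 x) * (if x0 < x then (1:ℝ) else 0)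
          - (f1 x - f0 x) * δ x))
        = (∫ x in Ioi x0, (f1 x - f0 x)) - ∫ x, (f1 x - f0 x) * δ x := by
      rw [integral_sub (aux_int hgi (indmIoi x0) (ind0 x0) (ind1 x0)) (aux_int hgi hδm hδ0 hδ1),
        hindDIoi x0]
    have hub : ∫ x, (f1 x - f0 x) * δ x ≤ ∫ x in Ioi x0, (f1 x - f0 x) := by
      have h1 : 0 ≤ ∫ x, ((f1 x - f0 x) * (if x0 < x then (1:ℝ) else 0)
          - (f1 x - f0 x) * δ x) := integral_nonneg hpt0
      rw [hsplit0] at h1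
      linarith
    rcases eq_or_lt_of_le hub with heq | hlt2
    · have hz : (∫ x, ((f1 x - f0 x) * (if x0 < x then (1:ℝ) else 0)
          - (f1 x - f0 x) * δ x)) = 0 := by
        rw [hsplit0]; linarith
      have haez := (integral_eq_zero_iff_of_nonneg hpt0 hint0).1 hz
      have hae : (fun x => if x0 < x then (1:ℝ) else 0) =ᵐ[volume] δ := by
        filter_upwards [haez, hx0ae] with x h1 h2
        have h3 : (f1 x - f0 x) * ((if x0 < x then (1:ℝ) else 0) - δ x) = 0 := by
          have h4 : (f1 x - f0 x) * (if x0 < x then (1:ℝ) else 0)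
              - (f1 x - f0 x) * δ x = 0 := h1
          linear_combination h4
        rcases mul_eq_zero.1 h3 with h5 | h5
        · exact absurd (by linarith [sub_eq_zero.1 h5] : f1 x = f0 x) (hnex h2)
        · linarith [sub_eq_zero.1 h5]
      exact ⟨_, Or.inl ⟨x0, rfl⟩, keyae _ (indmIoi x0) (ind0 x0) (ind1 x0) hae⟩
    · rcases le_or_gt 0 c with hc | hc
      · -- need τ < x0
        obtain ⟨τ1, hτ1x0, hτ1⟩ : ∃ τ1, τ1 < x0 ∧
            (∫ x in Ioi τ1, (f1 x - f0 x)) < ∫ x, (f1 x - f0 x) * δ x := by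
          have h1 : ∀ᶠ τ : ℝ in Filter.atBot,
              (∫ x in Ioi τ, (f1 x - f0 x)) < ∫ x, (f1 x - f0 x) * δ x :=
            hGbot.eventually_lt_const hD
          have h2 : ∀ᶠ τ : ℝ in Filter.atBot, τ < x0 := Filter.eventually_lt_atBot x0
          obtain ⟨τ1, h3, h4⟩ := (h2.and h1).exists
          exact ⟨τ1, h3, h4⟩
        obtain ⟨τ, hτmem, hτval⟩ := intermediate_value_Icc hτ1x0.le
          (hGc.continuousOn) ⟨hτ1.le, hlt2.le⟩
        have hτval' : (∫ x in Ioi τ, (f1 x - f0 x)) = ∫ x, (f1 x - f0 x) * δ x := hτval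
        have hτx0 : τ < x0 := by
          rcases eq_or_lt_of_le hτmem.2 with h | h
          · exfalso; rw [h] at hτval'; linarith
          · exact h
        have hDγ : (∫ x, (f1 x - f0 x) * (if τ < x then (1:ℝ) else 0))
            = ∫ x, (f1 x - f0 x) * δ x := by rw [hindDIoi τ]; exact hτval'
        refine ⟨_, Or.inl ⟨τ, rfl⟩, key _ (indmIoi τ) (ind0 τ) (ind1 τ) hDγ ?_⟩
        have hnp := np_final _ (indmIoi τ) (ind0 τ) (ind1 τ) hDγ (f1 τ / f0 τ) (hptIoi τ)
        have hk : f1 τ / f0 τ < 1 := (div_lt_one (hf0pos τ)).2 (hltx hτx0)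
        have hd : 0 ≤ (∫ x, f1 x * (if τ < x then (1:ℝ) else 0)) - ∫ x, f1 x * δ x := by
          nlinarith [hnp, hk]
        exact mul_nonneg hd hc
      · -- need τ > x0
        obtain ⟨τ2, hτ2x0, hτ2⟩ : ∃ τ2, x0 < τ2 ∧
            (∫ x in Ioi τ2, (f1 x - f0 x)) < ∫ x, (f1 x - f0 x) * δ x := by
          have h1 : ∀ᶠ τ : ℝ in Filter.atTop,
              (∫ x in Ioi τ, (f1 x - f0 x)) < ∫ x, (f1 x - f0 x) * δ x :=
            hGtop.eventually_lt_const hD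
          have h2 : ∀ᶠ τ : ℝ in Filter.atTop, x0 < τ := Filter.eventually_gt_atTop x0
          obtain ⟨τ2, h3, h4⟩ := (h2.and h1).exists
          exact ⟨τ2, h3, h4⟩
        obtain ⟨τ, hτmem, hτval⟩ := intermediate_value_Icc' hτ2x0.le
          (hGc.continuousOn) ⟨hτ2.le, hlt2.le⟩
        have hτval' : (∫ x in Ioi τ, (f1 x - f0 x)) = ∫ x, (f1 x - f0 x) * δ x := hτval
        have hτx0 : x0 < τ := by
          rcases eq_or_lt_of_le hτmem.1 with h | h
          · exfalso; rw [← h] at hτval'; linarith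
          · exact h
        have hDγ : (∫ x, (f1 x - f0 x) * (if τ < x then (1:ℝ) else 0))
            = ∫ x, (f1 x - f0 x) * δ x := by rw [hindDIoi τ]; exact hτval'
        refine ⟨_, Or.inl ⟨τ, rfl⟩, key _ (indmIoi τ) (ind0 τ) (ind1 τ) hDγ ?_⟩
        have hnp := np_final _ (indmIoi τ) (ind0 τ) (ind1 τ) hDγ (f1 τ / f0 τ) (hptIoi τ)
        have hk : 1 < f1 τ / f0 τ := (one_lt_div (hf0pos τ)).2 (hgtx hτx0)
        have hd : (∫ x, f1 x * (if τ < x then (1:ℝ) else 0)) - (∫ x, f1 x * δ x) ≤ 0 := by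
          nlinarith [hnp, hk]
        nlinarith [hd, hc]
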